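/- arXiv:1903.10976 — 5 statements merged into one kernel-verified Lean document; each statement's English description precedes it below -/
import Mathlib

section
/- Let $M$ be an absorbing Markov chain with states $S_0, S_1, \ldots, S_m$ where $S_m$ is absorbing, transitions only between adjacent states and to $S_m$ (i.e., from $S_i$ with $0<i<m-1$ one can go to $S_{i-1}$, $S_{i+1}$, $S_m$ or stay; from $S_0$ to $S_1$, $S_m$ or stay; from $S_{m-1}$ to $S_{m-2}$, $S_m$ or stay), all these transition probabilities positive, and suppose the absorption probabilities satisfy $p_{i,m} \leq p_{i+1,m}$ for all $0 \le i \le m-2$. Let $E[T_i]$ denote the expected absorption time starting from $S_i$. Then $E[T_{i-1}] \geq E[T_i]$ for all $1 \leq i \leq m$. -/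
/-- Monotonicity of expected absorption times of the birth-death-with-absorption
Markov chain: `E (i-1) ≥ E i` for `1 ≤ i ≤ m`. -/
theorem absorption_time_monotone
    (m : ℕ) (hm : 2 ≤ m) (p : ℕ → ℕ → ℝ) (E : ℕ → ℝ)
    (hEm : E m = 0)
    (hpos_up : ∀ i, i < m - 1 → 0 < p i (i + 1))
    (hpos_down : ∀ i, 0 < i → i < m → 0 < p i (i - 1))
    (hpos_abs : ∀ i, i < m → 0 < p i m)
    (hmono : ∀ i, i ≤ m - 2 → p i m ≤ p (i + 1) m)
    (h0 : 1 = p 0 1 * (E 0 - E 1) + p 0 m * E 0)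
    (hmid : ∀ i, 0 < i → i < m - 1 →
      1 = p i (i + 1) * (E i - E (i + 1)) + p i (i - 1) * (E i - E (i - 1))
        + p i m * E i)
    (htop : 1 = p (m - 1) (m - 2) * (E (m - 1) - E (m - 2))
        + p (m - 1) m * E (m - 1)) :
    ∀ i, 1 ≤ i → i ≤ m → E i ≤ E (i - 1) := by
  -- Key lemma: it is impossible that `E (j-1) < E j` and `p j m * E j < 1`
  -- for `1 ≤ j ≤ m - 1`.
  have bad : ∀ j, 1 ≤ j → j ≤ m - 1 → E (j - 1) < E j → p j m * E j < 1 → False := by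
    intro j
    induction j with
    | zero => intro h; omega
    | succ n ih =>
      intro h1 h2 hlt hclt
      have hn1 : (n + 1 : ℕ) - 1 = n := rfl
      rw [hn1] at hlt
      rcases Nat.eq_zero_or_pos n with hn0 | hnpos
      · -- j = 1 : get a contradiction from the equation at state 0
        subst hn0
        have hc01 : p 0 m ≤ p 1 m := hmono 0 (by omega)
        have hc1 : 0 < p 1 m := hpos_abs 1 (by omega)
        have hcB : p 0 m * E 0 < 1 := by
          rcases le_or_gt (E 0) 0 with hE0 | hE0
          · have : p 0 m * E 0 ≤ 0 := mul_nonpos_of_nonneg_of_nonpos (hpos_abs 0 (by omega)).le hE0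
            linarith
          · have h1' : p 0 m * E 0 ≤ p 1 m * E 0 := mul_le_mul_of_nonneg_right hc01 hE0.le
            have h2' : p 1 m * E 0 < p 1 m * E 1 := mul_lt_mul_of_pos_left hlt hc1
            linarith
        have hp01 : 0 < p 0 1 := hpos_up 0 (by omega)
        have : p 0 1 * (E 0 - E 1) < 0 := mul_neg_of_pos_of_neg hp01 (by linarith)
        linarith
      · -- j = n + 1 ≥ 2 : propagate badness down to n
        have hnm : n < m - 1 := by omega
        have hcmono : p n m ≤ p (n + 1) m := hmono n (by omega)
        have hcn1 : 0 < p (n + 1) m := hpos_abs (n + 1) (by omega)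
        have hcnE : p n m * E n < 1 := by
          rcases le_or_gt (E n) 0 with hEn | hEn
          · have : p n m * E n ≤ 0 := mul_nonpos_of_nonneg_of_nonpos (hpos_abs n (by omega)).le hEn
            linarith
          · have h1' : p n m * E n ≤ p (n + 1) m * E n := mul_le_mul_of_nonneg_right hcmono hEn.le
            have h2' : p (n + 1) m * E n < p (n + 1) m * E (n + 1) := mul_lt_mul_of_pos_left hlt hcn1
            linarith
        have heq := hmid n hnpos hnm
        have ha : p n (n + 1) * (E n - E (n + 1)) < 0 :=
          mul_neg_of_pos_of_neg (hpos_up n hnm) (by linarith)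
        have hb : 0 < p n (n - 1) * (E n - E (n - 1)) := by linarith
        have hlt' : E (n - 1) < E n := by
          by_contra hcon
          push_neg at hcon
          have : p n (n - 1) * (E n - E (n - 1)) ≤ 0 :=
            mul_nonpos_of_nonneg_of_nonpos (hpos_down n hnpos (by omega)).le (by linarith)
          linarith
        exact ih (by omega) (by omega) hlt' hcnE
  -- Positivity facts at the top state
  have hbm : 0 < p (m - 1) (m - 2) := by
    have := hpos_down (m - 1) (by omega) (by omega)
    have hE : m - 1 - 1 = m - 2 := by omega
    rwa [hE] at this
  have hcm : 0 < p (m - 1) m := hpos_abs (m - 1) (by omega)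
  -- Main downward induction
  have key : ∀ d i, 1 ≤ i → i ≤ m → m - i = d → E i ≤ E (i - 1) := by
    intro d
    induction d with
    | zero =>
      intro i h1 h2 hd
      have him : i = m := by omega
      rw [him, hEm]
      by_contra hcon
      push_neg at hcon
      -- E (m-1) < 0
      have hcE : p (m - 1) m * E (m - 1) < 0 := mul_neg_of_pos_of_neg hcm hcon
      have hb : 0 < p (m - 1) (m - 2) * (E (m - 1) - E (m - 2)) := by linarith
      have hlt : E (m - 1 - 1) < E (m - 1) := by
        have hE : m - 1 - 1 = m - 2 := by omega
        rw [hE]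
        by_contra hc2
        push_neg at hc2
        have : p (m - 1) (m - 2) * (E (m - 1) - E (m - 2)) ≤ 0 :=
          mul_nonpos_of_nonneg_of_nonpos hbm.le (by linarith)
        linarith
      exact bad (m - 1) (by omega) (by omega) hlt (by linarith)
    | succ n ih =>
      intro i h1 h2 hd
      by_contra hcon
      push_neg at hcon
      rcases eq_or_lt_of_le (show i ≤ m - 1 by omega) with him | him
      · -- i = m - 1
        rw [him] at hcon
        have hlt : E (m - 1 - 1) < E (m - 1) := hcon
        have hlt' : E (m - 2) < E (m - 1) := by
          have hE : m - 1 - 1 = m - 2 := by omega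
          rwa [hE] at hlt
        have hb : 0 < p (m - 1) (m - 2) * (E (m - 1) - E (m - 2)) :=
          mul_pos hbm (by linarith)
        exact bad (m - 1) (by omega) (by omega) hlt (by linarith)
      · -- 1 ≤ i ≤ m - 2
        have hup : E (i + 1) ≤ E i := by
          have := ih (i + 1) (by omega) (by omega) (by omega)
          simpa using this
        have heq := hmid i (by omega) (by omega)
        have ha : 0 ≤ p i (i + 1) * (E i - E (i + 1)) :=
          mul_nonneg (hpos_up i (by omega)).le (by linarith)
        have hb : 0 < p i (i - 1) * (E i - E (i - 1)) :=
          mul_pos (hpos_down i (by omega) (by omega)) (by linarith)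
        exact bad i (by omega) (by omega) hcon (by linarith)
  intro i h1 h2
  exact key (m - i) i h1 h2 rfl
end

section
/- Let $A = [a_{ik}]$ be an $n \times n$ strictly diagonally dominant matrix, i.e., $|a_{ii}| > \sum_{k \neq i} |a_{ik}|$ for all $i$. Then $A$ is invertible, and writing $A^{-1} = [n_{ik}]$, for each $k$ we have $|n_{kk}| \leq \left(|a_{kk}| - \sum_{l \neq k} |a_{kl}|\right)^{-1}$. -/
open scoped BigOperators

/-- A strictly (row) diagonally dominant real matrix is invertible, and the
diagonal entries of its inverse satisfy
`|n_kk| ≤ (|a_kk| - ∑_{l ≠ k} |a_kl|)⁻¹`. -/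
theorem sdd_inverse_diagonal_bound
    (n : ℕ) (A : Matrix (Fin n) (Fin n) ℝ)
    (hsdd : ∀ i, ∑ k ∈ Finset.univ.erase i, |A i k| < |A i i|) :
    IsUnit A.det ∧
      ∀ k, |A⁻¹ k k| ≤ (|A k k| - ∑ l ∈ Finset.univ.erase k, |A k l|)⁻¹ := by
  have hdet : A.det ≠ 0 := by
    apply det_ne_zero_of_sum_row_lt_diag
    intro i
    simpa [Real.norm_eq_abs] using hsdd i
  have hunit : IsUnit A.det := isUnit_iff_ne_zero.mpr hdet
  refine ⟨hunit, fun k => ?_⟩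
  set N := A⁻¹ with hN
  have hmul : A * N = 1 := Matrix.mul_nonsing_inv A hunit
  have hrow : ∀ i, ∑ j, A i j * N j k = (1 : Matrix (Fin n) (Fin n) ℝ) i k := by
    intro i
    have := congrFun (congrFun hmul i) k
    simpa [Matrix.mul_apply] using this
  -- max of |N j k| is attained at j = k
  have hmax : ∀ j, |N j k| ≤ |N k k| := by
    obtain ⟨i, -, hi⟩ := Finset.exists_max_image Finset.univ (fun j => |N j k|)
      ⟨k, Finset.mem_univ k⟩
    have hi' : ∀ j, |N j k| ≤ |N i k| := fun j => hi j (Finset.mem_univ j)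
    by_cases hik : i = k
    · subst hik; exact hi'
    · exfalso
      -- row i gives 0
      have h0 : ∑ j, A i j * N j k = 0 := by
        rw [hrow i]; simp [Matrix.one_apply, hik]
      have hsplit : A i i * N i k = -∑ j ∈ Finset.univ.erase i, A i j * N j k := by
        have h := Finset.sum_erase_eq_sub (f := fun j => A i j * N j k)
          (Finset.mem_univ i)
        rw [h0] at h
        linarith [h]
      have habs : |A i i| * |N i k| ≤
          (∑ j ∈ Finset.univ.erase i, |A i j|) * |N i k| := by
        calc |A i i| * |N i k| = |A i i * N i k| := (abs_mul _ _).symm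
          _ = |∑ j ∈ Finset.univ.erase i, A i j * N j k| := by rw [hsplit, abs_neg]
          _ ≤ ∑ j ∈ Finset.univ.erase i, |A i j * N j k| :=
              Finset.abs_sum_le_sum_abs _ _
          _ ≤ ∑ j ∈ Finset.univ.erase i, |A i j| * |N i k| := by
              apply Finset.sum_le_sum
              intro j _
              rw [abs_mul]
              exact mul_le_mul_of_nonneg_left (hi' j) (abs_nonneg _)
          _ = (∑ j ∈ Finset.univ.erase i, |A i j|) * |N i k| := by
              rw [Finset.sum_mul]
      have hM0 : |N i k| ≤ 0 := by
        by_contra h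
        push_neg at h
        have := mul_lt_mul_of_pos_right (hsdd i) h
        linarith
      have hM : ∀ j, N j k = 0 := by
        intro j
        have := hi' j
        have := abs_nonneg (N j k)
        have : |N j k| = 0 := by linarith [hi' j]
        exact abs_eq_zero.mp this
      have h1 : ∑ j, A k j * N j k = 1 := by
        rw [hrow k]; simp [Matrix.one_apply]
      simp [hM] at h1
  -- final bound
  have h1 : ∑ j, A k j * N j k = 1 := by
    rw [hrow k]; simp [Matrix.one_apply]
  set s := ∑ l ∈ Finset.univ.erase k, |A k l| with hs
  have hpos : 0 < |A k k| - s := by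
    have := hsdd k
    simp only [← hs] at this ⊢
    linarith
  have hsplit : A k k * N k k = 1 - ∑ j ∈ Finset.univ.erase k, A k j * N j k := by
    have h := Finset.sum_erase_eq_sub (f := fun j => A k j * N j k)
      (Finset.mem_univ k)
    rw [h1] at h
    linarith [h]
  have habs : |A k k| * |N k k| ≤ 1 + s * |N k k| := by
    calc |A k k| * |N k k| = |A k k * N k k| := (abs_mul _ _).symm
      _ = |1 - ∑ j ∈ Finset.univ.erase k, A k j * N j k| := by rw [hsplit]
      _ ≤ |(1 : ℝ)| + |∑ j ∈ Finset.univ.erase k, A k j * N j k| := abs_sub _ _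
      _ ≤ 1 + ∑ j ∈ Finset.univ.erase k, |A k j * N j k| := by
          have := Finset.abs_sum_le_sum_abs
            (fun j => A k j * N j k) (Finset.univ.erase k)
          simp only [abs_one]
          linarith
      _ ≤ 1 + ∑ j ∈ Finset.univ.erase k, |A k j| * |N k k| := by
          have : ∑ j ∈ Finset.univ.erase k, |A k j * N j k|
              ≤ ∑ j ∈ Finset.univ.erase k, |A k j| * |N k k| := by
            apply Finset.sum_le_sum
            intro j _
            rw [abs_mul]
            exact mul_le_mul_of_nonneg_left (hmax j) (abs_nonneg _)
          linarith
      _ = 1 + s * |N k k| := by rw [Finset.sum_mul]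
  rw [← one_div, le_div_iff₀ hpos]
  nlinarith [abs_nonneg (N k k)]
end

section
/- Let $x, y \in \{0,1\}^n$ have equal numbers of ones and Hamming distance $2d$ with $d \geq 1$. If $z$ is produced by uniform crossover (each bit of $z$ equals the corresponding bit of $x$ or of $y$, chosen independently and uniformly at random), then the probability that $z$ has strictly more ones than $x$ is at least $\frac{1 - \binom{2d}{d}2^{-2d}}{2} \geq 1/4$. -/
open scoped BigOperators

/-- Number of one-bits of a bitstring. -/
def countOnes {n : ℕ} (x : Fin n → Bool) : ℕ :=
  (Finset.univ.filter fun i => x i = true).card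

lemma two_central_le (d : ℕ) (hd : 1 ≤ d) : 2 * Nat.choose (2*d) d ≤ 2 ^ (2*d) := by
  induction d with
  | zero => omega
  | succ k ih =>
    rcases Nat.eq_or_lt_of_le hd with h | h
    · have : k = 0 := by omega
      subst this; decide
    · have hk : 1 ≤ k := by omega
      have ih' := ih hk
      have key := Nat.succ_mul_centralBinom_succ k
      simp only [Nat.centralBinom] at key
      have hmul : (k+1) * (2 * (2*(k+1)).choose (k+1)) ≤ (k+1) * (2^(2*k)*4) := by
        nlinarith [key, ih']
      have h1 := Nat.le_of_mul_le_mul_left hmul (by omega)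
      calc 2 * (2*(k+1)).choose (k+1) ≤ 2 ^ (2*k) * 4 := h1
        _ = 2 ^ (2*(k+1)) := by ring

/-- If `x, y ∈ {0,1}ⁿ` have the same number of ones and Hamming distance `2d`
(`d ≥ 1`), then the probability (fraction of the `2ⁿ` uniform crossover masks)
that the offspring has strictly more ones than `x` is at least
`(1 - C(2d,d) 2^{-2d})/2 ≥ 1/4`. -/
theorem uniform_crossover_improvement_prob
    (n d : ℕ) (hd : 1 ≤ d) (x y : Fin n → Bool)
    (hones : countOnes x = countOnes y)
    (hdist : (Finset.univ.filter fun i => x i ≠ y i).card = 2 * d) :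
    (1 - (Nat.choose (2 * d) d : ℝ) / 2 ^ (2 * d)) / 2 ≤
      ((Finset.univ.filter fun s : Fin n → Bool =>
          countOnes x < countOnes fun i => if s i then x i else y i).card : ℝ)
        / 2 ^ n ∧
    (1 : ℝ) / 4 ≤ (1 - (Nat.choose (2 * d) d : ℝ) / 2 ^ (2 * d)) / 2 := by
  classical
  have hp1 : (0:ℝ) < 2^(2*d) := by positivity
  have hcent : (Nat.choose (2*d) d : ℝ) * 2 ≤ 2^(2*d) := by
    exact_mod_cast (by have := two_central_le d hd; omega :
      Nat.choose (2*d) d * 2 ≤ 2^(2*d))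
  constructor
  · -- main part
    set D : Finset (Fin n) := Finset.univ.filter fun i => x i ≠ y i with hDdef
    let z : (Fin n → Bool) → Fin n → Bool := fun s i => if s i then x i else y i
    let F : (Fin n → Bool) → Fin n → Bool := fun s i => if x i ≠ y i then !(s i) else s i
    have hFF : ∀ s, F (F s) = s := by
      intro s; funext i
      simp only [F]
      by_cases h : x i = y i <;> simp [h]
    have hsum : ∀ s, countOnes (z s) + countOnes (z (F s)) = countOnes x + countOnes y := by
      intro s
      unfold countOnes
      rw [Finset.card_filter, Finset.card_filter, Finset.card_filter, Finset.card_filter,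
        ← Finset.sum_add_distrib, ← Finset.sum_add_distrib]
      apply Finset.sum_congr rfl
      intro i _
      cases hx : x i <;> cases hy : y i <;> cases hs : s i <;> simp [z, F, hx, hy, hs]
    set M : Finset (Fin n → Bool) :=
      Finset.univ.filter fun s => countOnes x < countOnes (z s) with hMdef
    let L : Finset (Fin n → Bool) := Finset.univ.filter fun s => countOnes (z s) < countOnes x
    let E : Finset (Fin n → Bool) := Finset.univ.filter fun s => countOnes (z s) = countOnes x
    have hML : M.card = L.card := by
      apply Finset.card_bij (fun s _ => F s)
      · intro s hs
        simp only [hMdef, L, Finset.mem_filter, Finset.mem_univ, true_and] at hs ⊢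
        have := hsum s
        omega
      · intro s _ t _ h
        have := congrArg F h
        rwa [hFF, hFF] at this
      · intro t ht
        refine ⟨F t, ?_, hFF t⟩
        simp only [hMdef, L, Finset.mem_filter, Finset.mem_univ, true_and] at ht ⊢
        have := hsum (F t)
        rw [hFF] at this
        omega
    have hpart : M.card + L.card + E.card = 2 ^ n := by
      have h1 : (2:ℕ) ^ n = (Finset.univ : Finset (Fin n → Bool)).card := by
        simp [Finset.card_univ]
      rw [h1]
      have huniv : M ∪ L ∪ E = Finset.univ := by
        ext s
        simp only [hMdef, L, E, Finset.mem_union, Finset.mem_filter, Finset.mem_univ, true_and,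
          iff_true]
        omega
      rw [← huniv, Finset.card_union_of_disjoint, Finset.card_union_of_disjoint]
      · rw [Finset.disjoint_left]; intro s h1 h2
        simp only [hMdef, L, Finset.mem_filter, Finset.mem_univ, true_and] at h1 h2; omega
      · rw [Finset.disjoint_left]; intro s h1 h2
        simp only [hMdef, L, E, Finset.mem_union, Finset.mem_filter, Finset.mem_univ,
          true_and] at h1 h2
        omega
    have houtside : ∀ i, i ∉ D → x i = y i := by
      intro i hi; simp [hDdef] at hi; exact hi
    have hinside : ∀ i, i ∈ D → x i ≠ y i := by
      intro i hi; simp [hDdef] at hi; exact hi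
    have hsplit : ∀ w : Fin n → Bool,
        countOnes w = (D.filter fun i => w i = true).card
          + (Dᶜ.filter fun i => w i = true).card := by
      intro w
      unfold countOnes
      rw [← Finset.union_compl D, Finset.filter_union, Finset.card_union_of_disjoint]
      exact Finset.disjoint_filter_filter disjoint_compl_right
    have hA : (D.filter fun i => x i = true).card = d := by
      have hunion : (D.filter fun i => x i = true) ∪ (D.filter fun i => y i = true) = D := by
        ext i
        simp only [Finset.mem_union, Finset.mem_filter]
        constructor
        · rintro (⟨h, _⟩ | ⟨h, _⟩) <;> exact h
        · intro h
          have := hinside i h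
          cases hx : x i <;> cases hy : y i <;> simp_all
      have hdisj : Disjoint (D.filter fun i => x i = true) (D.filter fun i => y i = true) := by
        rw [Finset.disjoint_left]
        intro i h1 h2
        simp only [Finset.mem_filter] at h1 h2
        exact hinside i h1.1 (h1.2.trans h2.2.symm)
      have hcardsum : (D.filter fun i => x i = true).card
          + (D.filter fun i => y i = true).card = 2 * d := by
        rw [← Finset.card_union_of_disjoint hdisj, hunion, hdist]
      have houter : (Dᶜ.filter fun i => x i = true) = (Dᶜ.filter fun i => y i = true) := by
        apply Finset.filter_congr
        intro i hi
        rw [houtside i (Finset.mem_compl.mp hi)]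
      have h1 := hsplit x
      have h2 := hsplit y
      rw [houter] at h1
      omega
    have hzout : ∀ s, (Dᶜ.filter fun i => z s i = true) = (Dᶜ.filter fun i => x i = true) := by
      intro s
      apply Finset.filter_congr
      intro i hi
      have hxy := houtside i (Finset.mem_compl.mp hi)
      simp only [z]
      cases hsi : s i <;> simp [hxy]
    have hzD : ∀ s ∈ E, (D.filter fun i => z s i = true).card = d := by
      intro s hs
      simp only [E, Finset.mem_filter, Finset.mem_univ, true_and] at hs
      have h1 := hsplit (z s)
      have h2 := hsplit x
      rw [hzout s] at h1
      omega
    have hn2d : Dᶜ.card = n - 2*d := by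
      rw [Finset.card_compl, hdist]
      simp
    have hE : E.card ≤ Nat.choose (2*d) d * 2 ^ (n - 2*d) := by
      have hle := Finset.card_le_card_of_injOn
        (f := fun s => ((D.filter fun i => z s i = true), (Dᶜ.filter fun i => s i = true)))
        (s := E) (t := (D.powersetCard d) ×ˢ Dᶜ.powerset) ?_ ?_
      · calc E.card ≤ _ := hle
          _ = Nat.choose (2*d) d * 2 ^ (n - 2*d) := by
            rw [Finset.card_product, Finset.card_powersetCard, Finset.card_powerset,
              hdist, hn2d]
      · intro s hs
        rw [Finset.mem_coe, Finset.mem_product]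
        constructor
        · rw [Finset.mem_powersetCard]
          exact ⟨Finset.filter_subset _ _, hzD s hs⟩
        · rw [Finset.mem_powerset]
          exact Finset.filter_subset _ _
      · intro s _ t _ h
        rw [Prod.mk.injEq] at h
        obtain ⟨h1, h2⟩ := h
        funext i
        by_cases hiD : i ∈ D
        · have hzz : z s i = z t i := by
            have h' := Finset.ext_iff.mp h1 i
            simp only [Finset.mem_filter, hiD, true_and] at h'
            cases hzs : z s i <;> cases hzt : z t i
            · rfl
            · rw [hzs, hzt] at h'; simp at h'
            · rw [hzs, hzt] at h'; simp at h'
            · rfl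
          have hxy := hinside i hiD
          simp only [z] at hzz
          cases hsi : s i <;> cases hti : t i
          · rfl
          · rw [hsi, hti] at hzz; simp at hzz; exact absurd hzz.symm hxy
          · rw [hsi, hti] at hzz; simp at hzz; exact absurd hzz hxy
          · rfl
        · have h' := Finset.ext_iff.mp h2 i
          simp only [Finset.mem_filter, Finset.mem_compl, hiD, not_false_iff, true_and] at h'
          cases hsi : s i <;> cases hti : t i
          · rfl
          · rw [hsi, hti] at h'; simp at h'
          · rw [hsi, hti] at h'; simp at h'
          · rfl
    have hn : 2*d ≤ n := by
      have h1 : D.card ≤ n := by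
        calc D.card ≤ (Finset.univ : Finset (Fin n)).card := Finset.card_le_card (by simp)
          _ = n := by simp
      rw [hdist] at h1
      exact h1
    -- final arithmetic
    have hkey : 2 * M.card + E.card = 2 ^ n := by omega
    show (1 - (Nat.choose (2 * d) d : ℝ) / 2 ^ (2 * d)) / 2 ≤ (M.card : ℝ) / 2 ^ n
    have hp2 : (0:ℝ) < 2^n := by positivity
    rw [div_le_div_iff₀ (by norm_num) hp2]
    have h2n : (2:ℝ)^n = 2^(2*d) * 2^(n-2*d) := by
      rw [← pow_add]; congr 1; omega
    have e3 : (1 - (Nat.choose (2 * d) d : ℝ)/2^(2*d)) * 2^n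
        = 2^n - (Nat.choose (2 * d) d : ℝ) * 2^(n-2*d) := by
      rw [h2n]; field_simp
    have hkeyR : 2 * (M.card:ℝ) + E.card = 2^n := by exact_mod_cast hkey
    have hER : (E.card:ℝ) ≤ (Nat.choose (2 * d) d : ℝ) * 2^(n-2*d) := by
      exact_mod_cast hE
    linarith
  · -- 1/4 bound
    have hC2 : (Nat.choose (2 * d) d : ℝ)/2^(2*d) ≤ 1/2 := by
      rw [div_le_div_iff₀ hp1 (by norm_num)]
      linarith
    linarith
end

section
/- (Additive drift theorem) Let $(X_t)_{t \geq 0}$ be a stochastic process adapted to a filtration $(\mathcal{F}_t)$, taking values in $S \subseteq \{0\} \cup [x_{\min}, x_{\max}]$ with $x_{\min} > 0$. Let $g : \{0\} \cup [x_{\min}, x_{\max}] \to \mathbb{R}_{\geq 0}$ satisfy $g(0) = 0$ and $0 < g(x) < \infty$ for $x \neq 0$. Let $T = \min\{t : X_t = 0\}$. If there exists $\alpha > 0$ such that $E[g(X_t) - g(X_{t+1}) \mid \mathcal{F}_t, X_t \geq x_{\min}] \geq \alpha$ for all $t$, then $E[T \mid X_0] \leq g(X_0)/\alpha$. -/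
open MeasureTheory

/-- Additive drift theorem (Lehre–Witt): if the potential `g` of an adapted
process `(X_t)` on `{0} ∪ [x_min, x_max]` decreases in conditional expectation
by at least `α > 0` whenever `X_t ≥ x_min`, then the process hits `0` almost
surely and the conditional expected hitting time given `ℱ 0` is at most
`g(X_0)/α`. -/
theorem additive_drift
    {Ω : Type*} {m0 : MeasurableSpace Ω} (μ : Measure Ω) [IsProbabilityMeasure μ]
    (ℱ : Filtration ℕ m0) (X : ℕ → Ω → ℝ) (hX : Adapted ℱ X)
    (xmin xmax : ℝ) (hxmin : 0 < xmin)
    (hrange : ∀ t, ∀ᵐ ω ∂μ, X t ω = 0 ∨ (xmin ≤ X t ω ∧ X t ω ≤ xmax))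
    (g : ℝ → ℝ) (hg0 : g 0 = 0)
    (hgpos : ∀ x, xmin ≤ x → x ≤ xmax → 0 < g x)
    (hgint : ∀ t, Integrable (fun ω => g (X t ω)) μ)
    (α : ℝ) (hα : 0 < α)
    (hdrift : ∀ t, ∀ᵐ ω ∂μ, xmin ≤ X t ω →
      (μ[fun ω' => g (X (t + 1) ω') | ℱ t]) ω ≤ g (X t ω) - α)
    (T : Ω → ℕ) (hT : ∀ ω, T ω = sInf {t | X t ω = 0}) :
    (∀ᵐ ω ∂μ, ∃ t, X t ω = 0) ∧
    ∀ᵐ ω ∂μ, (μ[fun ω' => (T ω' : ℝ) | ℱ 0]) ω ≤ g (X 0 ω) / α := by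
  classical
  have hle : ∀ t, ℱ t ≤ m0 := fun t => ℱ.le t
  have hXm : ∀ t, Measurable (X t) := fun t => Measurable.mono (hX t) (hle t) le_rfl
  -- basic facts about T
  have hT_mem : ∀ ω, (∃ s, X s ω = 0) → X (T ω) ω = 0 := by
    intro ω h; rw [hT]; exact Nat.sInf_mem h
  have hT_le : ∀ ω s, X s ω = 0 → T ω ≤ s := by
    intro ω s h; rw [hT]; exact Nat.sInf_le h
  have hT_empty : ∀ ω, (∀ s, X s ω ≠ 0) → T ω = 0 := by
    intro ω h; rw [hT]
    have : {t | X t ω = 0} = ∅ := by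
      ext s; simp [h s]
    rw [this, Nat.sInf_empty]
  -- the events "hit zero by time t"
  set H : ℕ → Set Ω := fun t => {ω | ∃ s ≤ t, X s ω = 0} with hHdef
  have hH_T_le : ∀ t ω, ω ∈ H t → T ω ≤ t := by
    rintro t ω ⟨s, hs, hXs⟩; exact (hT_le ω s hXs).trans hs
  have hH_X : ∀ t ω, ω ∉ H t → X t ω ≠ 0 := fun t ω h hx => h ⟨t, le_rfl, hx⟩
  have hH_ex : ∀ t ω, ω ∈ H t → X (T ω) ω = 0 := by
    rintro t ω ⟨s, _, hXs⟩; exact hT_mem ω ⟨s, hXs⟩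
  have hHmeas : ∀ t, MeasurableSet[ℱ t] (H t) := by
    intro t
    have : H t = ⋃ s ∈ Set.Iic t, {ω | X s ω = 0} := by
      ext ω; simp [hHdef]
    rw [this]
    refine MeasurableSet.biUnion (Set.to_countable _) (fun s hs => ?_)
    exact ℱ.mono hs _ ((hX s) (measurableSet_singleton 0))
  have hHmeas0 : ∀ t, MeasurableSet (H t) := fun t => hle t _ (hHmeas t)
  -- measurability of T
  have hTm : Measurable T := by
    apply measurable_to_countable'
    intro n
    rcases Nat.eq_zero_or_pos n with rfl | hn
    · have : T ⁻¹' {0} = {ω | X 0 ω = 0} ∪ ⋂ s, {ω | X s ω = 0}ᶜ := by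
        ext ω
        simp only [Set.mem_preimage, Set.mem_singleton_iff, Set.mem_union, Set.mem_iInter,
          Set.mem_compl_iff, Set.mem_setOf_eq]
        constructor
        · intro h
          by_cases hex : ∃ s, X s ω = 0
          · left; have := hT_mem ω hex; rwa [h] at this
          · right; push_neg at hex; exact hex
        · rintro (h | h)
          · exact Nat.le_zero.mp (hT_le ω 0 h)
          · exact hT_empty ω h
      rw [this]
      exact ((hXm 0) (measurableSet_singleton 0)).union
        (MeasurableSet.iInter (fun s => ((hXm s) (measurableSet_singleton 0)).compl))
    · have : T ⁻¹' {n} = {ω | X n ω = 0} ∩ ⋂ s ∈ Set.Iio n, {ω | X s ω = 0}ᶜ := by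
        ext ω
        simp only [Set.mem_preimage, Set.mem_singleton_iff, Set.mem_inter_iff, Set.mem_iInter,
          Set.mem_compl_iff, Set.mem_setOf_eq, Set.mem_Iio]
        constructor
        · intro h
          have hex : ∃ s, X s ω = 0 := by
            by_contra hex; push_neg at hex
            have := hT_empty ω hex; omega
          refine ⟨by rw [← h]; exact hT_mem ω hex, fun s hs hXs => ?_⟩
          have := hT_le ω s hXs; omega
        · rintro ⟨h1, h2⟩
          have h3 := hT_le ω n h1
          rcases lt_or_eq_of_le h3 with h4 | h4
          · exact absurd (hT_mem ω ⟨n, h1⟩) (h2 _ h4)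
          · exact h4
      rw [this]
      exact ((hXm n) (measurableSet_singleton 0)).inter
        (MeasurableSet.biInter (Set.to_countable _)
          (fun s _ => ((hXm s) (measurableSet_singleton 0)).compl))
  -- the supermartingale-like potential process
  set M : ℕ → Ω → ℝ := fun t ω => if ω ∈ H t then α * (T ω : ℝ) else g (X t ω) + α * t
    with hMdef
  have hMapp : ∀ t ω, M t ω
      = if ω ∈ H t then α * (T ω : ℝ) else g (X t ω) + α * t := fun _ _ => rfl
  have hM0 : ∀ ω, M 0 ω = g (X 0 ω) := by
    intro ω
    rw [hMapp]
    by_cases h : ω ∈ H 0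
    · obtain ⟨s, hs, hXs⟩ := h
      have hs0 : s = 0 := Nat.le_zero.mp hs
      subst hs0
      have hT0 : T ω = 0 := Nat.le_zero.mp (hT_le ω 0 hXs)
      rw [if_pos ⟨0, le_rfl, hXs⟩, hT0, hXs, hg0]
      simp
    · rw [if_neg h]
      simp
  have hMrep : ∀ t, M (t + 1) = (H t).indicator (fun ω => α * (T ω : ℝ))
      + (H t)ᶜ.indicator (fun ω => g (X (t + 1) ω) + α * (t + 1)) := by
    intro t
    funext ω
    rw [Pi.add_apply, hMapp]
    by_cases h : ω ∈ H t
    · have h' : ω ∈ H (t + 1) := by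
        obtain ⟨s, hs, hXs⟩ := h; exact ⟨s, hs.trans (Nat.le_succ t), hXs⟩
      rw [if_pos h', Set.indicator_of_mem h, Set.indicator_of_notMem (by simp [h])]
      ring
    · rw [Set.indicator_of_notMem h, Set.indicator_of_mem (Set.mem_compl h)]
      by_cases h' : ω ∈ H (t + 1)
      · obtain ⟨s, hs, hXs⟩ := h'
        have hs' : s = t + 1 := by
          by_contra hc
          exact h ⟨s, by omega, hXs⟩
        subst hs'
        have hTω : T ω = t + 1 := by
          have h1 : T ω ≤ t + 1 := hT_le ω _ hXs
          rcases lt_or_eq_of_le h1 with h2 | h2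
          · exact absurd (h ⟨T ω, by omega, hT_mem ω ⟨_, hXs⟩⟩) (by simp)
          · exact h2
        rw [if_pos ⟨t + 1, le_rfl, hXs⟩, hTω, hXs, hg0]
        push_cast
        ring
      · rw [if_neg h']
        push_cast
        ring
  -- strong measurability of the stopped part
  have hsm1 : ∀ t, StronglyMeasurable[ℱ t] ((H t).indicator (fun ω => α * (T ω : ℝ))) := by
    intro t
    have hrw : (H t).indicator (fun ω => α * (T ω : ℝ))
        = fun ω => α * (((if ω ∈ H t then T ω else 0 : ℕ) : ℕ) : ℝ) := by
      funext ω; by_cases h : ω ∈ H t <;> simp [Set.indicator, h]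
    have hum : Measurable[ℱ t] (fun ω => if ω ∈ H t then T ω else 0) := by
      refine @measurable_to_countable' ℕ Ω _ _ (ℱ t) _ ?_
      intro k
      rcases Nat.eq_zero_or_pos k with rfl | hk
      · have : (fun ω => if ω ∈ H t then T ω else 0) ⁻¹' {0}
            = (H t)ᶜ ∪ {ω | X 0 ω = 0} := by
          ext ω
          simp only [Set.mem_preimage, Set.mem_singleton_iff, Set.mem_union,
            Set.mem_compl_iff, Set.mem_setOf_eq]
          constructor
          · intro h
            by_cases hH : ω ∈ H t
            · right
              rw [if_pos hH] at h
              have := hH_ex t ω hH; rwa [h] at this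
            · left; exact hH
          · rintro (h | h)
            · rw [if_neg h]
            · have hH : ω ∈ H t := ⟨0, Nat.zero_le t, h⟩
              rw [if_pos hH]
              exact Nat.le_zero.mp (hT_le ω 0 h)
        rw [this]
        exact (hHmeas t).compl.union (ℱ.mono (Nat.zero_le t) _
          ((hX 0) (measurableSet_singleton 0)))
      · by_cases hkt : k ≤ t
        · have : (fun ω => if ω ∈ H t then T ω else 0) ⁻¹' {k}
              = {ω | X k ω = 0} ∩ ⋂ s ∈ Set.Iio k, {ω | X s ω = 0}ᶜ := by
            ext ω
            simp only [Set.mem_preimage, Set.mem_singleton_iff, Set.mem_inter_iff,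
              Set.mem_iInter, Set.mem_compl_iff, Set.mem_setOf_eq, Set.mem_Iio]
            constructor
            · intro h
              by_cases hH : ω ∈ H t
              · rw [if_pos hH] at h
                refine ⟨by rw [← h]; exact hH_ex t ω hH, fun s hs hXs => ?_⟩
                have := hT_le ω s hXs; omega
              · rw [if_neg hH] at h; omega
            · rintro ⟨h1, h2⟩
              have hH : ω ∈ H t := ⟨k, hkt, h1⟩
              rw [if_pos hH]
              have h3 := hT_le ω k h1
              rcases lt_or_eq_of_le h3 with h4 | h4
              · exact absurd (hH_ex t ω hH) (h2 _ h4)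
              · exact h4
          rw [this]
          refine (ℱ.mono hkt _ ((hX k) (measurableSet_singleton 0))).inter
            (MeasurableSet.biInter (Set.to_countable _) (fun s hs => ?_))
          exact (ℱ.mono (le_of_lt (lt_of_lt_of_le hs hkt)) _
            ((hX s) (measurableSet_singleton 0))).compl
        · have : (fun ω => if ω ∈ H t then T ω else 0) ⁻¹' {k} = ∅ := by
            ext ω
            simp only [Set.mem_preimage, Set.mem_singleton_iff, Set.mem_empty_iff_false,
              iff_false]
            intro h
            by_cases hH : ω ∈ H t
            · rw [if_pos hH] at h
              have := hH_T_le t ω hH; omega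
            · rw [if_neg hH] at h; omega
          rw [this]
          exact @MeasurableSet.empty Ω (ℱ t)
    rw [hrw]
    exact ((measurable_from_top.comp hum).const_mul α).stronglyMeasurable
  -- integrability
  have hind1 : ∀ t, Integrable ((H t).indicator (fun ω => α * (T ω : ℝ))) μ := by
    intro t
    refine Integrable.mono' (integrable_const (α * t)) ?_ (ae_of_all _ fun ω => ?_)
    · exact ((hsm1 t).mono (hle t)).aestronglyMeasurable
    · by_cases h : ω ∈ H t
      · rw [Set.indicator_of_mem h, Real.norm_eq_abs, abs_of_nonneg (by positivity)]
        have := hH_T_le t ω h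
        have : (T ω : ℝ) ≤ (t : ℝ) := by exact_mod_cast this
        nlinarith
      · rw [Set.indicator_of_notMem h]
        simp; positivity
  have hind2 : ∀ t, Integrable ((H t)ᶜ.indicator
      (fun ω => g (X (t + 1) ω) + α * (t + 1))) μ := by
    intro t
    exact ((hgint (t + 1)).add (integrable_const _)).indicator (hHmeas0 t).compl
  have hMint : ∀ t, Integrable (M t) μ := by
    intro t
    rcases t with _ | t
    · have : M 0 = fun ω => g (X 0 ω) := funext hM0
      rw [this]; exact hgint 0
    · rw [hMrep t]; exact (hind1 t).add (hind2 t)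
  -- supermartingale step
  have hstep : ∀ t, (μ[M (t + 1)|ℱ t]) ≤ᵐ[μ] M t := by
    intro t
    have h1 : μ[M (t + 1)|ℱ t] =ᵐ[μ]
        μ[(H t).indicator (fun ω => α * (T ω : ℝ))|ℱ t]
        + μ[(H t)ᶜ.indicator (fun ω => g (X (t + 1) ω) + α * (t + 1))|ℱ t] := by
      rw [hMrep t]
      exact condExp_add (hind1 t) (hind2 t) _
    have h2 : μ[(H t).indicator (fun ω => α * (T ω : ℝ))|ℱ t]
        = (H t).indicator (fun ω => α * (T ω : ℝ)) :=
      condExp_of_stronglyMeasurable (hle t) (hsm1 t) (hind1 t)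
    have h3 : μ[(H t)ᶜ.indicator (fun ω => g (X (t + 1) ω) + α * (t + 1))|ℱ t] =ᵐ[μ]
        (H t)ᶜ.indicator (μ[fun ω => g (X (t + 1) ω) + α * (t + 1)|ℱ t]) :=
      condExp_indicator ((hgint (t + 1)).add (integrable_const _)) (hHmeas t).compl
    have h4 : μ[fun ω => g (X (t + 1) ω) + α * (t + 1)|ℱ t] =ᵐ[μ]
        (μ[fun ω => g (X (t + 1) ω)|ℱ t]) + fun _ => α * (t + 1) := by
      have := condExp_add (m := ℱ t) (hgint (t + 1))
        (integrable_const (μ := μ) (α * ((t : ℝ) + 1)))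
      refine this.trans ?_
      rw [condExp_const (hle t)]
    filter_upwards [h1, h3, h4, hdrift t, hrange t] with ω e1 e3 e4 hd hr
    rw [e1, Pi.add_apply, h2, e3]
    by_cases h : ω ∈ H t
    · rw [Set.indicator_of_mem h, Set.indicator_of_notMem (by simp [h]), hMapp, if_pos h]
      simp
    · rw [Set.indicator_of_notMem h, Set.indicator_of_mem (Set.mem_compl h), e4,
        hMapp, if_neg h, Pi.add_apply]
      have hx : xmin ≤ X t ω := by
        rcases hr with h0 | ⟨h1', _⟩
        · exact absurd h0 (hH_X t ω h)
        · exact h1'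
      have := hd hx
      push_cast
      linarith
  -- a.e. nonnegativity and lower bound by the truncated hitting time
  have hMlb : ∀ t : ℕ, ∀ᵐ ω ∂μ, α * min (t : ℝ) (T ω : ℝ) ≤ M t ω ∧ 0 ≤ M t ω := by
    intro t
    filter_upwards [hrange t] with ω hr
    rw [hMapp]
    by_cases h : ω ∈ H t
    · rw [if_pos h]
      have h1 : (T ω : ℝ) ≤ (t : ℝ) := by exact_mod_cast hH_T_le t ω h
      constructor
      · rw [min_eq_right h1]
      · positivity
    · rw [if_neg h]
      have hg' : 0 < g (X t ω) := by
        rcases hr with h0 | ⟨h1', h2'⟩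
        · exact absurd h0 (hH_X t ω h)
        · exact hgpos _ h1' h2'
      have h2 : min (t : ℝ) (T ω : ℝ) ≤ (t : ℝ) := min_le_left _ _
      constructor
      · nlinarith
      · positivity
  -- integral bound
  have hIM : ∀ t, ∫ ω, M t ω ∂μ ≤ ∫ ω, g (X 0 ω) ∂μ := by
    intro t
    induction t with
    | zero =>
      have : M 0 = fun ω => g (X 0 ω) := funext hM0
      rw [this]
    | succ t ih =>
      have h1 : ∫ ω, M (t + 1) ω ∂μ = ∫ ω, (μ[M (t + 1)|ℱ t]) ω ∂μ :=
        (integral_condExp (hle t)).symm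
      rw [h1]
      exact le_trans (integral_mono_ae integrable_condExp (hMint t) (hstep t)) ih
  -- Part 1: the process hits zero a.s.
  have hNnull : μ {ω | ∀ s, X s ω ≠ 0} = 0 := by
    set N : Set Ω := {ω | ∀ s, X s ω ≠ 0} with hNdef
    have hNmeas : MeasurableSet N := by
      have : N = ⋂ s, {ω | X s ω = 0}ᶜ := by
        ext ω; simp [hNdef]
      rw [this]
      exact MeasurableSet.iInter (fun s => ((hXm s) (measurableSet_singleton 0)).compl)
    by_contra hne
    have hpos : 0 < (μ N).toReal :=
      ENNReal.toReal_pos hne (measure_ne_top μ N)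
    obtain ⟨t, ht⟩ := exists_nat_gt ((∫ ω, g (X 0 ω) ∂μ) / (α * (μ N).toReal))
    have key : α * t * (μ N).toReal ≤ ∫ ω, g (X 0 ω) ∂μ := by
      have h1 : ∫ _ω in N, (α * t : ℝ) ∂μ ≤ ∫ ω in N, M t ω ∂μ := by
        refine setIntegral_mono_ae_restrict (integrableOn_const
          (measure_ne_top μ N)) ((hMint t).integrableOn) ?_
        rw [Filter.EventuallyLE, ae_restrict_iff' hNmeas]
        filter_upwards [hrange t] with ω hr hN
        have hnH : ω ∉ H t := by
          rintro ⟨s, _, hXs⟩; exact hN s hXs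
        rw [hMapp, if_neg hnH]
        have hg' : 0 < g (X t ω) := by
          rcases hr with h0 | ⟨h1', h2'⟩
          · exact absurd h0 (hN t)
          · exact hgpos _ h1' h2'
        linarith
      have h2 : ∫ _ω in N, (α * t : ℝ) ∂μ = (μ N).toReal * (α * t) := by
        rw [setIntegral_const, smul_eq_mul, measureReal_def]
      have h3 : ∫ ω in N, M t ω ∂μ ≤ ∫ ω, M t ω ∂μ :=
        setIntegral_le_integral (hMint t) ((hMlb t).mono fun ω h => h.2)
      calc α * t * (μ N).toReal = ∫ _ω in N, (α * t : ℝ) ∂μ := by rw [h2]; ring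
        _ ≤ ∫ ω in N, M t ω ∂μ := h1
        _ ≤ ∫ ω, M t ω ∂μ := h3
        _ ≤ ∫ ω, g (X 0 ω) ∂μ := hIM t
    have hαr : 0 < α * (μ N).toReal := by positivity
    rw [div_lt_iff₀ hαr] at ht
    nlinarith
  have hpart1 : ∀ᵐ ω ∂μ, ∃ t, X t ω = 0 := by
    rw [ae_iff]
    have : {ω | ¬∃ t, X t ω = 0} = {ω | ∀ s, X s ω ≠ 0} := by
      ext ω; push_neg; rfl
    rw [this]
    exact hNnull
  -- integrability of T
  have hTcast : Measurable (fun ω => (T ω : ℝ)) := measurable_from_top.comp hTm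
  have hmin_int : ∀ t : ℕ, Integrable (fun ω => min (t : ℝ) (T ω : ℝ)) μ := by
    intro t
    refine Integrable.mono' (integrable_const (t : ℝ)) ?_ (ae_of_all _ fun ω => ?_)
    · exact (measurable_const.min hTcast).aestronglyMeasurable
    · rw [Real.norm_eq_abs, abs_of_nonneg (le_min (by positivity) (by positivity))]
      exact min_le_left _ _
  have hTlin : ∫⁻ ω, ENNReal.ofReal (α * (T ω : ℝ)) ∂μ
      ≤ ENNReal.ofReal (∫ ω, g (X 0 ω) ∂μ) := by
    have hpt : ∀ ω, ENNReal.ofReal (α * (T ω : ℝ))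
        = ⨆ n : ℕ, ENNReal.ofReal (α * min (n : ℝ) (T ω : ℝ)) := by
      intro ω
      refine le_antisymm ?_ ?_
      · refine le_iSup_of_le (T ω) (le_of_eq ?_)
        rw [min_self]
      · refine iSup_le fun n => ENNReal.ofReal_le_ofReal ?_
        have h1 : min (n : ℝ) (T ω : ℝ) ≤ (T ω : ℝ) := min_le_right _ _
        nlinarith
    have hmeas : ∀ n : ℕ, Measurable (fun ω => ENNReal.ofReal (α * min (n : ℝ) (T ω : ℝ))) :=
      fun n => ENNReal.measurable_ofReal.comp ((measurable_const.min hTcast).const_mul α)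
    have hmono : Monotone (fun (n : ℕ) (ω : Ω) => ENNReal.ofReal (α * min (n : ℝ) (T ω : ℝ))) := by
      intro a b hab ω
      refine ENNReal.ofReal_le_ofReal ?_
      have : min (a : ℝ) (T ω : ℝ) ≤ min (b : ℝ) (T ω : ℝ) :=
        min_le_min (by exact_mod_cast hab) le_rfl
      nlinarith
    calc ∫⁻ ω, ENNReal.ofReal (α * (T ω : ℝ)) ∂μ
        = ∫⁻ ω, ⨆ n : ℕ, ENNReal.ofReal (α * min (n : ℝ) (T ω : ℝ)) ∂μ := by
          simp_rw [hpt]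
      _ = ⨆ n : ℕ, ∫⁻ ω, ENNReal.ofReal (α * min (n : ℝ) (T ω : ℝ)) ∂μ :=
          lintegral_iSup hmeas hmono
      _ ≤ ENNReal.ofReal (∫ ω, g (X 0 ω) ∂μ) := by
          refine iSup_le fun n => ?_
          have h1 : ∫⁻ ω, ENNReal.ofReal (α * min (n : ℝ) (T ω : ℝ)) ∂μ
              ≤ ∫⁻ ω, ENNReal.ofReal (M n ω) ∂μ := by
            refine lintegral_mono_ae ?_
            filter_upwards [hMlb n] with ω h
            exact ENNReal.ofReal_le_ofReal h.1
          have h2 : ∫⁻ ω, ENNReal.ofReal (M n ω) ∂μ = ENNReal.ofReal (∫ ω, M n ω ∂μ) :=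
            (ofReal_integral_eq_lintegral_ofReal (hMint n)
              ((hMlb n).mono fun ω h => h.2)).symm
          exact h1.trans (h2.le.trans (ENNReal.ofReal_le_ofReal (hIM n)))
  have hTint : Integrable (fun ω => (T ω : ℝ)) μ := by
    refine ⟨hTcast.aestronglyMeasurable, ?_⟩
    rw [hasFiniteIntegral_iff_norm]
    have heq : ∀ ω, ENNReal.ofReal ‖(T ω : ℝ)‖ = ENNReal.ofReal (T ω : ℝ) := by
      intro ω; rw [Real.norm_eq_abs, abs_of_nonneg (by positivity)]
    simp_rw [heq]
    have h2 : ENNReal.ofReal α * ∫⁻ ω, ENNReal.ofReal (T ω : ℝ) ∂μ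
        ≤ ENNReal.ofReal (∫ ω, g (X 0 ω) ∂μ) := by
      rw [← lintegral_const_mul' _ _ ENNReal.ofReal_ne_top]
      refine le_trans (le_of_eq (lintegral_congr fun ω => ?_)) hTlin
      rw [← ENNReal.ofReal_mul hα.le]
    have h3 : ∫⁻ ω, ENNReal.ofReal (T ω : ℝ) ∂μ ≠ ⊤ := by
      intro htop
      rw [htop, ENNReal.mul_top (ENNReal.ofReal_pos.mpr hα).ne'] at h2
      exact ENNReal.ofReal_ne_top (top_le_iff.mp h2)
    exact lt_top_iff_ne_top.mpr h3
  -- conditional expectation bounds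
  have hcondM : ∀ t : ℕ, 1 ≤ t → (μ[M t|ℱ 0]) ≤ᵐ[μ] fun ω => g (X 0 ω) := by
    intro t ht
    induction t, ht using Nat.le_induction with
    | base =>
      have hM1 : M 1 = (H 0)ᶜ.indicator (fun ω => g (X (0 + 1) ω) + α * ((0 : ℕ) + 1)) := by
        rw [hMrep 0]
        funext ω
        rw [Pi.add_apply]
        by_cases h : ω ∈ H 0
        · obtain ⟨s, hs, hXs⟩ := h
          have hs0 : s = 0 := Nat.le_zero.mp hs
          subst hs0
          have hT0 : T ω = 0 := Nat.le_zero.mp (hT_le ω 0 hXs)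
          have hH0 : ω ∈ H 0 := ⟨0, le_rfl, hXs⟩
          have hnc : ω ∉ (H 0)ᶜ := by
            simp only [Set.mem_compl_iff, not_not]; exact hH0
          rw [Set.indicator_of_mem hH0, Set.indicator_of_notMem hnc, hT0]
          simp
        · rw [Set.indicator_of_notMem h]
          simp
      have e1 : μ[M 1|ℱ 0] =ᵐ[μ]
          (H 0)ᶜ.indicator (μ[fun ω => g (X (0 + 1) ω) + α * ((0 : ℕ) + 1)|ℱ 0]) := by
        rw [hM1]
        exact condExp_indicator ((hgint (0 + 1)).add (integrable_const _)) (hHmeas 0).compl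
      have e2 : μ[fun ω => g (X (0 + 1) ω) + α * ((0 : ℕ) + 1)|ℱ 0] =ᵐ[μ]
          (μ[fun ω => g (X (0 + 1) ω)|ℱ 0]) + fun _ => α * ((0 : ℕ) + 1) := by
        refine (condExp_add (hgint (0 + 1)) (integrable_const _) _).trans ?_
        rw [condExp_const (hle 0)]
      filter_upwards [e1, e2, hdrift 0, hrange 0] with ω h1 h2 hd hr
      rw [h1]
      by_cases h : ω ∈ H 0
      · rw [Set.indicator_of_notMem (by simp [h])]
        obtain ⟨s, hs, hXs⟩ := h
        have hs0 : s = 0 := Nat.le_zero.mp hs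
        subst hs0
        rw [hXs, hg0]
      · rw [Set.indicator_of_mem (Set.mem_compl h), h2, Pi.add_apply]
        have hx : xmin ≤ X 0 ω := by
          rcases hr with h0 | ⟨h1', _⟩
          · exact absurd h0 (hH_X 0 ω h)
          · exact h1'
        have := hd hx
        push_cast
        linarith
    | succ t ht ih =>
      have e1 : μ[M (t + 1)|ℱ 0] =ᵐ[μ] μ[μ[M (t + 1)|ℱ t]|ℱ 0] :=
        (condExp_condExp_of_le (ℱ.mono (Nat.zero_le t)) (hle t)).symm
      have e2 : μ[μ[M (t + 1)|ℱ t]|ℱ 0] ≤ᵐ[μ] μ[M t|ℱ 0] :=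
        condExp_mono integrable_condExp (hMint t) (hstep t)
      exact e1.le.trans (e2.trans ih)
  have hcondmin : ∀ t : ℕ, ∀ᵐ ω ∂μ,
      (μ[fun ω' => min (t : ℝ) (T ω' : ℝ)|ℱ 0]) ω ≤ g (X 0 ω) / α := by
    intro t
    have hlb : (fun ω => α * min (t : ℝ) (T ω : ℝ)) ≤ᵐ[μ] M (t + 1) := by
      filter_upwards [hMlb (t + 1)] with ω h
      refine le_trans ?_ h.1
      have : min (t : ℝ) (T ω : ℝ) ≤ min ((t : ℝ) + 1) (T ω : ℝ) :=
        min_le_min (by linarith) le_rfl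
      have h2 : (((t : ℕ) + 1 : ℕ) : ℝ) = (t : ℝ) + 1 := by push_cast; ring
      rw [h2]
      nlinarith
    have h1 : μ[fun ω => α * min (t : ℝ) (T ω : ℝ)|ℱ 0] ≤ᵐ[μ] μ[M (t + 1)|ℱ 0] :=
      condExp_mono ((hmin_int t).const_mul α) (hMint (t + 1)) hlb
    have h2 : μ[fun ω => α * min (t : ℝ) (T ω : ℝ)|ℱ 0] =ᵐ[μ]
        fun ω => α * (μ[fun ω' => min (t : ℝ) (T ω' : ℝ)|ℱ 0]) ω := by
      have h3 := condExp_smul (μ := μ) (m := ℱ 0) (α : ℝ)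
        (fun ω' => min (t : ℝ) (T ω' : ℝ))
      have h4 : ((α : ℝ) • fun ω' => min (t : ℝ) (T ω' : ℝ))
          = fun ω' => α * min (t : ℝ) (T ω' : ℝ) := by
        funext ω'; simp [smul_eq_mul]
      rw [h4] at h3
      refine h3.trans (ae_of_all _ fun ω => ?_)
      simp [smul_eq_mul]
    filter_upwards [h1, h2, hcondM (t + 1) (by omega)] with ω e1 e2 e3
    rw [le_div_iff₀ hα]
    calc (μ[fun ω' => min (t : ℝ) (T ω' : ℝ)|ℱ 0]) ω * α
        = α * (μ[fun ω' => min (t : ℝ) (T ω' : ℝ)|ℱ 0]) ω := by ring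
      _ ≤ (μ[M (t + 1)|ℱ 0]) ω := by rw [← e2]; exact e1
      _ ≤ g (X 0 ω) := e3
  -- the remainder terms
  have hDnn : ∀ t : ℕ, (0 : Ω → ℝ) ≤ᵐ[μ]
      μ[fun ω => (T ω : ℝ) - min (t : ℝ) (T ω : ℝ)|ℱ 0] := by
    intro t
    refine condExp_nonneg (ae_of_all _ fun ω => ?_)
    have := min_le_right (t : ℝ) (T ω : ℝ)
    simp only [Pi.zero_apply]
    linarith
  have hDsub : ∀ t : ℕ, μ[fun ω => (T ω : ℝ) - min (t : ℝ) (T ω : ℝ)|ℱ 0] =ᵐ[μ]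
      μ[fun ω' => (T ω' : ℝ)|ℱ 0] - μ[fun ω' => min (t : ℝ) (T ω' : ℝ)|ℱ 0] := by
    intro t
    have h4 : (fun ω => (T ω : ℝ) - min (t : ℝ) (T ω : ℝ))
        = (fun ω' => (T ω' : ℝ)) - fun ω' => min (t : ℝ) (T ω' : ℝ) := rfl
    rw [h4]
    exact condExp_sub hTint (hmin_int t) _
  have hItend : Filter.Tendsto
      (fun t : ℕ => ∫ ω, ((T ω : ℝ) - min (t : ℝ) (T ω : ℝ)) ∂μ)
      Filter.atTop (nhds 0) := by
    have hdct := tendsto_integral_of_dominated_convergence (μ := μ)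
      (F := fun (t : ℕ) ω => (T ω : ℝ) - min (t : ℝ) (T ω : ℝ))
      (f := fun _ => (0 : ℝ)) (fun ω => (T ω : ℝ))
      (fun n => (hTint.1.sub (hmin_int n).1))
      hTint
      (fun n => ae_of_all _ fun ω => ?_)
      (ae_of_all _ fun ω => ?_)
    · simpa using hdct
    · show ‖(T ω : ℝ) - min (n : ℝ) (T ω : ℝ)‖ ≤ (T ω : ℝ)
      rw [Real.norm_eq_abs, abs_of_nonneg (by simp [min_le_right])]
      have : (0 : ℝ) ≤ min (n : ℝ) (T ω : ℝ) := le_min (by positivity) (by positivity)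
      linarith
    · have hev : ∀ᶠ t : ℕ in Filter.atTop,
          (T ω : ℝ) - min (t : ℝ) (T ω : ℝ) = 0 := by
        filter_upwards [Filter.eventually_ge_atTop (T ω)] with t hts
        rw [min_eq_right (by exact_mod_cast hts)]
        ring
      exact Filter.Tendsto.congr' (hev.mono fun t h => h.symm) tendsto_const_nhds
  refine ⟨hpart1, ?_⟩
  have hae_all : ∀ᵐ ω ∂μ, ∀ t : ℕ,
      (μ[fun ω' => (T ω' : ℝ)|ℱ 0]) ω - g (X 0 ω) / α
        ≤ (μ[fun ω' => (T ω' : ℝ) - min (t : ℝ) (T ω' : ℝ)|ℱ 0]) ω := by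
    rw [MeasureTheory.ae_all_iff]
    intro t
    filter_upwards [hDsub t, hcondmin t] with ω e1 e2
    rw [e1, Pi.sub_apply]
    linarith
  have hψ0 : ∫⁻ ω, ENNReal.ofReal
      ((μ[fun ω' => (T ω' : ℝ)|ℱ 0]) ω - g (X 0 ω) / α) ∂μ = 0 := by
    have hle' : ∀ t : ℕ, ∫⁻ ω, ENNReal.ofReal
        ((μ[fun ω' => (T ω' : ℝ)|ℱ 0]) ω - g (X 0 ω) / α) ∂μ
        ≤ ∫⁻ ω, ENNReal.ofReal
          ((μ[fun ω' => (T ω' : ℝ) - min (t : ℝ) (T ω' : ℝ)|ℱ 0]) ω) ∂μ := by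
      intro t
      refine lintegral_mono_ae ?_
      filter_upwards [hae_all] with ω h
      exact ENNReal.ofReal_le_ofReal (h t)
    have heq : ∀ t : ℕ, ∫⁻ ω, ENNReal.ofReal
        ((μ[fun ω' => (T ω' : ℝ) - min (t : ℝ) (T ω' : ℝ)|ℱ 0]) ω) ∂μ
        = ENNReal.ofReal (∫ ω, ((T ω : ℝ) - min (t : ℝ) (T ω : ℝ)) ∂μ) := by
      intro t
      rw [← ofReal_integral_eq_lintegral_ofReal integrable_condExp (hDnn t)]
      congr 1
      exact integral_condExp (hle 0)
    have htend : Filter.Tendsto (fun t : ℕ => ∫⁻ ω, ENNReal.ofReal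
        ((μ[fun ω' => (T ω' : ℝ) - min (t : ℝ) (T ω' : ℝ)|ℱ 0]) ω) ∂μ)
        Filter.atTop (nhds 0) := by
      simp_rw [heq]
      have := (ENNReal.continuous_ofReal.tendsto 0).comp hItend
      rw [ENNReal.ofReal_zero] at this
      exact this
    have hle0 := ge_of_tendsto' htend hle'
    exact le_antisymm hle0 zero_le
  have hψm : AEMeasurable (fun ω => ENNReal.ofReal
      ((μ[fun ω' => (T ω' : ℝ)|ℱ 0]) ω - g (X 0 ω) / α)) μ := by
    refine ENNReal.measurable_ofReal.comp_aemeasurable (AEMeasurable.sub ?_ ?_)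
    · exact (stronglyMeasurable_condExp.mono (hle 0)).measurable.aemeasurable
    · exact ((hgint 0).1.aemeasurable.div_const α)
  have hzero := (lintegral_eq_zero_iff' hψm).mp hψ0
  filter_upwards [hzero] with ω h
  have h2 : ENNReal.ofReal ((μ[fun ω' => (T ω' : ℝ)|ℱ 0]) ω - g (X 0 ω) / α) = 0 := h
  rw [ENNReal.ofReal_eq_zero] at h2
  linarith
end

section
/- Let $M$ be an absorbing Markov chain on transient states $0,\ldots,m-1$ and absorbing state $m$, with $I-Q$ strictly diagonally dominant, where $Q$ is the transient transition matrix. Then the expected absorption time from state $0$ satisfies $E[T_0] \leq n_{1,1} + \sum_{k=2}^m \frac{1}{p_{k-1,m}}$, where $n_{1,1}$ is the top-left entry of $(I-Q)^{-1}$ and $p_{k-1,m}$ is the one-step absorption probability from state $k-1$ (assumed positive for $k \geq 2$). -/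
open scoped BigOperators

/-- For an absorbing Markov chain with transient transition matrix `Q` such
that `I - Q` is strictly diagonally dominant (every row sum of the
non-negative matrix `Q` is `< 1`), the expected absorption time from state `0`
(namely `∑' t, ∑ k, (Q^t) 0 k`) is at most `n₁₁ + ∑_{k ≠ 0} 1/p_{k,m}`, where
`n₁₁` is the top-left entry of the fundamental matrix `(I - Q)⁻¹` and
`p_{k,m} = 1 - ∑ l, Q k l` is the one-step absorption probability from `k`. -/
theorem absorption_time_upper_bound
    (m : ℕ) (hm : 0 < m) (Q : Matrix (Fin m) (Fin m) ℝ)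
    (hnonneg : ∀ i k, 0 ≤ Q i k)
    (hrow : ∀ i, ∑ k, Q i k < 1)
    (pabs : Fin m → ℝ) (hpabs : ∀ i, pabs i = 1 - ∑ k, Q i k) :
    (∑' t : ℕ, ∑ k, (Q ^ t) (⟨0, hm⟩ : Fin m) k) ≤
      (1 - Q)⁻¹ ⟨0, hm⟩ ⟨0, hm⟩ +
        ∑ k ∈ Finset.univ.erase (⟨0, hm⟩ : Fin m), 1 / pabs k := by
  haveI : NeZero m := ⟨hm.ne'⟩
  have hne : (Finset.univ : Finset (Fin m)).Nonempty := ⟨⟨0, hm⟩, Finset.mem_univ _⟩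
  set z₀ : Fin m := ⟨0, hm⟩ with hz₀
  -- r : maximal row sum
  set r : ℝ := Finset.univ.sup' hne (fun i => ∑ k, Q i k) with hr
  have hr1 : r < 1 := (Finset.sup'_lt_iff hne).2 fun i _ => hrow i
  have hr0 : 0 ≤ r :=
    le_trans (Finset.sum_nonneg fun k _ => hnonneg z₀ k)
      (Finset.le_sup' (fun i => ∑ k, Q i k) (Finset.mem_univ z₀))
  have hrle : ∀ i, ∑ k, Q i k ≤ r := fun i =>
    Finset.le_sup' (fun i => ∑ k, Q i k) (Finset.mem_univ i)
  -- powers have nonnegative entries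
  have hpow_nonneg : ∀ (t : ℕ) (i j : Fin m), 0 ≤ (Q ^ t) i j := by
    intro t
    induction t with
    | zero =>
      intro i j
      simp only [pow_zero, Matrix.one_apply]
      split <;> norm_num
    | succ t ih =>
      intro i j
      rw [pow_succ, Matrix.mul_apply]
      exact Finset.sum_nonneg fun l _ => mul_nonneg (ih i l) (hnonneg l j)
  -- row sums of powers bounded by r^t
  have hpow_row : ∀ (t : ℕ) (i : Fin m), ∑ j, (Q ^ t) i j ≤ r ^ t := by
    intro t
    induction t with
    | zero =>
      intro i
      simp [Matrix.one_apply]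
    | succ t ih =>
      intro i
      rw [pow_succ']
      calc ∑ j, (Q * Q ^ t) i j = ∑ j, ∑ l, Q i l * (Q ^ t) l j := by
            simp [Matrix.mul_apply]
        _ = ∑ l, Q i l * ∑ j, (Q ^ t) l j := by
            rw [Finset.sum_comm]; simp [Finset.mul_sum]
        _ ≤ ∑ l, Q i l * r ^ t := by
            refine Finset.sum_le_sum fun l _ => ?_
            exact mul_le_mul_of_nonneg_left (ih l) (hnonneg i l)
        _ = (∑ l, Q i l) * r ^ t := by rw [Finset.sum_mul]
        _ ≤ r * r ^ t := by
            exact mul_le_mul_of_nonneg_right (hrle i) (pow_nonneg hr0 t)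
        _ = r ^ (t + 1) := (pow_succ' r t).symm
  have hentry_le : ∀ (t : ℕ) (i j : Fin m), (Q ^ t) i j ≤ r ^ t := fun t i j =>
    le_trans (Finset.single_le_sum (fun l _ => hpow_nonneg t i l) (Finset.mem_univ j))
      (hpow_row t i)
  -- summability of each entry
  have hsum : ∀ i j : Fin m, Summable fun t : ℕ => (Q ^ t) i j := fun i j =>
    Summable.of_nonneg_of_le (fun t => hpow_nonneg t i j) (fun t => hentry_le t i j)
      (summable_geometric_of_lt_one hr0 hr1)
  -- the fundamental matrix, entrywise
  set N : Matrix (Fin m) (Fin m) ℝ := fun i j => ∑' t : ℕ, (Q ^ t) i j with hN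
  have hNnonneg : ∀ i j, 0 ≤ N i j := fun i j =>
    tsum_nonneg fun t => hpow_nonneg t i j
  -- recurrence N = 1 + Q * N (entrywise)
  have hNrec : ∀ i j, N i j = (1 : Matrix (Fin m) (Fin m) ℝ) i j + ∑ l, Q i l * N l j := by
    intro i j
    have h1 : N i j = (Q ^ 0) i j + ∑' t : ℕ, (Q ^ (t + 1)) i j := by
      exact Summable.tsum_eq_zero_add (hsum i j)
    have h2 : ∀ t : ℕ, (Q ^ (t + 1)) i j = ∑ l, Q i l * (Q ^ t) l j := by
      intro t; rw [pow_succ', Matrix.mul_apply]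
    have h3 : (∑' t : ℕ, (Q ^ (t + 1)) i j) = ∑ l, Q i l * N l j := by
      calc (∑' t : ℕ, (Q ^ (t + 1)) i j) = ∑' t : ℕ, ∑ l, Q i l * (Q ^ t) l j := by
            exact tsum_congr fun t => h2 t
        _ = ∑ l, ∑' t : ℕ, Q i l * (Q ^ t) l j := by
            exact Summable.tsum_finsetSum fun l _ => (hsum l j).mul_left _
        _ = ∑ l, Q i l * N l j := by
            exact Finset.sum_congr rfl fun l _ => tsum_mul_left
    rw [h1, h3, pow_zero]
  -- (1 - Q) * N = 1, hence N is the inverse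
  have hmul : (1 - Q) * N = 1 := by
    ext i j
    rw [Matrix.mul_apply]
    have : ∀ l, ((1 : Matrix (Fin m) (Fin m) ℝ) - Q) i l * N l j =
        (1 : Matrix (Fin m) (Fin m) ℝ) i l * N l j - Q i l * N l j := by
      intro l; rw [Matrix.sub_apply, sub_mul]
    rw [Finset.sum_congr rfl fun l _ => this l, Finset.sum_sub_distrib]
    have hone : ∑ l, (1 : Matrix (Fin m) (Fin m) ℝ) i l * N l j = N i j := by
      simp [Matrix.one_apply]
    rw [hone]
    have := hNrec i j
    linarith [this]
  have hinv : (1 - Q)⁻¹ = N := Matrix.inv_eq_right_inv hmul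
  -- positivity of pabs
  have hp : ∀ i, 0 < pabs i := by
    intro i; rw [hpabs i]; linarith [hrow i]
  -- key bound: N z₀ k ≤ 1 / pabs k
  have hkey : ∀ k : Fin m, N z₀ k ≤ 1 / pabs k := by
    intro k
    set c : ℝ := Finset.univ.sup' hne (fun i => N i k) with hc
    obtain ⟨i₀, -, hi₀⟩ := Finset.exists_mem_eq_sup' hne (fun i => N i k)
    have hle : ∀ i, N i k ≤ c := fun i =>
      Finset.le_sup' (fun i => N i k) (Finset.mem_univ i)
    have hc0 : 0 ≤ c := le_trans (hNnonneg z₀ k) (hle z₀)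
    have hbound : c ≤ (1 : Matrix (Fin m) (Fin m) ℝ) i₀ k + (1 - pabs i₀) * c := by
      have h1 : c = N i₀ k := hi₀
      have h2 : ∑ l, Q i₀ l * N l k ≤ ∑ l, Q i₀ l * c :=
        Finset.sum_le_sum fun l _ => mul_le_mul_of_nonneg_left (hle l) (hnonneg i₀ l)
      have h3 : ∑ l, Q i₀ l * c = (1 - pabs i₀) * c := by
        rw [← Finset.sum_mul, hpabs i₀]; ring_nf
      have h4 : c = (1 : Matrix (Fin m) (Fin m) ℝ) i₀ k + ∑ l, Q i₀ l * N l k :=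
        h1.trans (hNrec i₀ k)
      linarith [h2, h3.le, h3.ge, h4.le, h4.ge]
    have hck : c ≤ 1 / pabs k := by
      by_cases hik : i₀ = k
      · subst hik
        rw [Matrix.one_apply_eq] at hbound
        have : pabs i₀ * c ≤ 1 := by nlinarith [hbound]
        rw [le_div_iff₀ (hp i₀)]
        linarith [this]
      · rw [Matrix.one_apply_ne hik] at hbound
        have : pabs i₀ * c ≤ 0 := by nlinarith [hbound]
        have hc0' : c ≤ 0 := nonpos_of_mul_nonpos_right ?_ (hp i₀)
        · exact le_trans hc0' (one_div_pos.mpr (hp k)).le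
        · linarith [this]
    exact le_trans (hle z₀) hck
  -- rewrite the LHS
  have hLHS : (∑' t : ℕ, ∑ k, (Q ^ t) z₀ k) = ∑ k, N z₀ k :=
    Summable.tsum_finsetSum fun k _ => hsum z₀ k
  rw [hLHS, hinv]
  rw [← Finset.add_sum_erase Finset.univ (fun k => N z₀ k) (Finset.mem_univ z₀)]
  exact add_le_add_right (Finset.sum_le_sum fun k _ => hkey k) _
end
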